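/- Let a and b be finite signed measures on ℝ that both have the same finite-length signature (z₁,…,z_n), with signature intervals (p_{i−1}, pᵢ] for a and (q_{i−1}, qᵢ] for b, and let α := ‖a‖ and β := ‖b‖ be the total variation measures (which have equal mass). Then the monotone coupling γ between α and β is concentrated on ⋃_{i=1}^{n} (p_{i−1}, pᵢ] × (q_{i−1}, qᵢ]. -/

import Mathlib

open MeasureTheory Set
open scoped ENNReal

noncomputable section

/-- `γ` is a coupling of `μ` and `ν`: its marginals are `μ` and `ν`. -/
def IsCoupling {X Y : Type*} [MeasurableSpace X] [MeasurableSpace Y]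
    (γ : Measure (X × Y)) (μ : Measure X) (ν : Measure Y) : Prop :=
  γ.map Prod.fst = μ ∧ γ.map Prod.snd = ν

/-- `γ` is the monotone coupling of the (finite, equal-mass) measures `μ` and `ν` on
`ℝ`: `γ((−∞,c] × (−∞,d]) = min(F_μ(c), F_ν(d))` for all `c, d`. -/
def IsMonotoneCoupling (γ : Measure (ℝ × ℝ)) (μ ν : Measure ℝ) : Prop :=
  IsCoupling γ μ ν ∧ ∀ c d : ℝ, γ (Iic c ×ˢ Iic d) = min (μ (Iic c)) (ν (Iic d))

/-- For points `p 1 < … < p (n-1)` (with the conventions `p₀ = −∞`, `p_n = +∞`),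
`sigInterval n p i` is the interval `(p_{i-1}, p_i]`, for `1 ≤ i ≤ n`. -/
def sigInterval (n : ℕ) (p : ℕ → ℝ) (i : ℕ) : Set ℝ :=
  (if i = 1 then Set.univ else Set.Ioi (p (i - 1))) ∩
    (if i = n then Set.univ else Set.Iic (p i))

/-- The finite signed measure `a` has finite-length signature `(z 1, …, z n)` with
signature points `p 1 < … < p (n-1)` (conventions `p₀ = −∞`, `p_n = +∞`, so the
signature intervals are `(p_{i-1}, p_i]`): on each signature interval `a` restricts to
either `a⁺` or `−a⁻` (i.e. the other Jordan part vanishes there), consecutive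
restrictions have opposite (nonzero) signs, and `z i = a((p_{i-1}, p_i])`. -/
def HasSignature (a : SignedMeasure ℝ) (n : ℕ) (p : ℕ → ℝ) (z : ℕ → ℝ) : Prop :=
  1 ≤ n ∧
  (∀ i, 1 ≤ i → i + 1 ≤ n - 1 → p i < p (i + 1)) ∧
  (∀ i, 1 ≤ i → i ≤ n → z i = a (sigInterval n p i)) ∧
  (∀ i, 1 ≤ i → i ≤ n → z i ≠ 0) ∧
  (∃ s : ℕ → Bool,
    (∀ i, 1 ≤ i → i + 1 ≤ n → s (i + 1) = !(s i)) ∧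
    (∀ i, 1 ≤ i → i ≤ n →
      if s i then a.toJordanDecomposition.negPart (sigInterval n p i) = 0
      else a.toJordanDecomposition.posPart (sigInterval n p i) = 0))

lemma measurableSet_sigInterval (n : ℕ) (p : ℕ → ℝ) (i : ℕ) :
    MeasurableSet (sigInterval n p i) := by
  unfold sigInterval
  split <;> split <;> measurability

instance totalVariation_isFiniteMeasure (a : SignedMeasure ℝ) :
    IsFiniteMeasure a.totalVariation := by
  unfold SignedMeasure.totalVariation; infer_instance

lemma signed_apply (a : SignedMeasure ℝ) {s : Set ℝ} (hs : MeasurableSet s) :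
    a s = (a.toJordanDecomposition.posPart s).toReal
      - (a.toJordanDecomposition.negPart s).toReal := by
  conv_lhs => rw [← a.toSignedMeasure_toJordanDecomposition]
  rw [JordanDecomposition.toSignedMeasure, VectorMeasure.sub_apply,
    Measure.toSignedMeasure_apply_measurable hs, Measure.toSignedMeasure_apply_measurable hs]
  rfl

/-- On each signature interval, the total variation of `a` is `|z i|`. -/
lemma totalVariation_sigInterval {a : SignedMeasure ℝ} {n : ℕ} {p : ℕ → ℝ} {z : ℕ → ℝ}
    (ha : HasSignature a n p z) {i : ℕ} (h1 : 1 ≤ i) (h2 : i ≤ n) :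
    a.totalVariation (sigInterval n p i) = ENNReal.ofReal |z i| := by
  obtain ⟨-, -, hz, -, s, -, hs⟩ := ha
  set I := sigInterval n p i with hI
  have hmeas : MeasurableSet I := measurableSet_sigInterval n p i
  have hzi : z i = (a.toJordanDecomposition.posPart I).toReal
      - (a.toJordanDecomposition.negPart I).toReal := by
    rw [hz i h1 h2, signed_apply a hmeas]
  have htv : a.totalVariation I =
      a.toJordanDecomposition.posPart I + a.toJordanDecomposition.negPart I := rfl
  have hs' := hs i h1 h2
  by_cases hb : s i
  · rw [if_pos hb] at hs'
    rw [htv, hs', add_zero]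
    rw [hs'] at hzi
    simp only [ENNReal.toReal_zero, sub_zero] at hzi
    rw [abs_of_nonneg (hzi ▸ ENNReal.toReal_nonneg), hzi,
      ENNReal.ofReal_toReal (measure_ne_top _ _)]
  · rw [if_neg hb] at hs'
    rw [htv, hs', zero_add]
    rw [hs'] at hzi
    simp only [ENNReal.toReal_zero, zero_sub] at hzi
    have hz' : |z i| = (a.toJordanDecomposition.negPart I).toReal := by
      rw [hzi, abs_neg, abs_of_nonneg ENNReal.toReal_nonneg]
    rw [hz', ENNReal.ofReal_toReal (measure_ne_top _ _)]

/-- The cumulative distribution of the total variation at the signature points. -/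
lemma totalVariation_Iic {a : SignedMeasure ℝ} {n : ℕ} {p : ℕ → ℝ} {z : ℕ → ℝ}
    (ha : HasSignature a n p z) :
    ∀ i, 1 ≤ i → i ≤ n - 1 →
      a.totalVariation (Iic (p i)) = ∑ j ∈ Finset.Icc 1 i, ENNReal.ofReal |z j| := by
  intro i hi
  induction i, hi using Nat.le_induction with
  | base =>
    intro hn
    have h1n : (1 : ℕ) ≠ n := by omega
    have : sigInterval n p 1 = Iic (p 1) := by
      simp [sigInterval, h1n]
    rw [← this, totalVariation_sigInterval ha le_rfl (by omega)]
    simp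
  | succ i hi IH =>
    intro hsucc
    have hin : i ≤ n - 1 := by omega
    have hlt : p i < p (i + 1) := ha.2.1 i hi hsucc
    have hInt : sigInterval n p (i + 1) = Ioc (p i) (p (i + 1)) := by
      have h1 : i + 1 ≠ 1 := by omega
      have h2 : i + 1 ≠ n := by omega
      rw [sigInterval, if_neg h1, if_neg h2, Nat.add_sub_cancel, Ioi_inter_Iic]
    have hsplit : Iic (p (i + 1)) = Iic (p i) ∪ Ioc (p i) (p (i + 1)) :=
      (Iic_union_Ioc_eq_Iic hlt.le).symm
    rw [hsplit, measure_union (Iic_disjoint_Ioc le_rfl) measurableSet_Ioc,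
      IH hin, ← hInt, totalVariation_sigInterval ha (by omega) (by omega),
      Finset.sum_Icc_succ_top (by omega : 1 ≤ i + 1)]

/-- Every real belongs to some signature interval, minimally. -/
lemma exists_sigInterval (n : ℕ) (hn : 1 ≤ n) (p : ℕ → ℝ) (x : ℝ) :
    ∃ i, 1 ≤ i ∧ i ≤ n ∧ x ∈ sigInterval n p i ∧
      ∀ j, 1 ≤ j → j < i → p j < x := by
  classical
  have hex : ∃ j, 1 ≤ j ∧ (j = n ∨ x ≤ p j) := ⟨n, hn, Or.inl rfl⟩
  set i := Nat.find hex with hidef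
  obtain ⟨hi1, hi2⟩ := Nat.find_spec hex
  have hmin : ∀ j, 1 ≤ j → j < i → p j < x := by
    intro j hj1 hji
    have := Nat.find_min hex hji
    push_neg at this
    exact (this hj1).2
  have hmin' : ∀ j, 1 ≤ j → j < i → j ≠ n := by
    intro j hj1 hji
    have := Nat.find_min hex hji
    push_neg at this
    exact (this hj1).1
  refine ⟨i, hi1, ?_, ?_, hmin⟩
  · exact Nat.find_le ⟨hn, Or.inl rfl⟩
  · constructor
    · split
      · trivial
      · next h =>
        have h2 : 2 ≤ i := by omega
        have : i - 1 < i := by omega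
        exact hmin (i - 1) (by omega) this
    · split
      · trivial
      · next h =>
        rcases hi2 with h' | h'
        · exact absurd h' h
        · exact h'

/-- If the finite signed measures `a` and `b` on `ℝ` have the same
finite-length signature `(z₁,…,z_n)` with signature intervals `(p_{i-1}, pᵢ]` and
`(q_{i-1}, qᵢ]`, and `α := ‖a‖`, `β := ‖b‖` are their total variations, then the
monotone coupling `γ` between `α` and `β` is concentrated on
`⋃_{i=1}^n (p_{i-1}, pᵢ] × (q_{i-1}, qᵢ]`. -/
theorem stmt11 (a b : SignedMeasure ℝ)
    (n : ℕ) (p q : ℕ → ℝ) (z : ℕ → ℝ)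
    (ha : HasSignature a n p z) (hb : HasSignature b n q z)
    (γ : Measure (ℝ × ℝ))
    (hγ : IsMonotoneCoupling γ a.totalVariation b.totalVariation) :
    γ ((⋃ i ∈ Finset.Icc 1 n, sigInterval n p i ×ˢ sigInterval n q i)ᶜ) = 0 := by
  set α := a.totalVariation with hα
  set β := b.totalVariation with hβ
  obtain ⟨⟨hfst, hsnd⟩, hmc⟩ := hγ
  have hn : 1 ≤ n := ha.1
  -- the key equality of CDFs at signature points
  have hcdf : ∀ i, 1 ≤ i → i ≤ n - 1 → α (Iic (p i)) = β (Iic (q i)) := by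
    intro i h1 h2
    rw [totalVariation_Iic ha i h1 h2, totalVariation_Iic hb i h1 h2]
  -- bad sets are null
  set N : ℕ → Set (ℝ × ℝ) :=
    fun i => Iic (p i) ×ˢ (Iic (q i))ᶜ ∪ (Iic (p i))ᶜ ×ˢ Iic (q i) with hN
  have hnull : ∀ i ∈ Finset.Ico 1 n, γ (N i) = 0 := by
    intro i hi
    rw [Finset.mem_Ico] at hi
    have h1 : 1 ≤ i := hi.1
    have h2 : i ≤ n - 1 := by omega
    have hαi : α (Iic (p i)) = γ (Iic (p i) ×ˢ (univ : Set ℝ)) := by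
      rw [prod_univ, ← Measure.map_apply measurable_fst measurableSet_Iic, hfst]
    have hβi : β (Iic (q i)) = γ ((univ : Set ℝ) ×ˢ Iic (q i)) := by
      rw [univ_prod, ← Measure.map_apply measurable_snd measurableSet_Iic, hsnd]
    have hrect : γ (Iic (p i) ×ˢ Iic (q i)) = α (Iic (p i)) := by
      rw [hmc (p i) (q i), hcdf i h1 h2, min_self, ← hcdf i h1 h2]
    have hrect' : γ (Iic (p i) ×ˢ Iic (q i)) = β (Iic (q i)) := by
      rw [hrect, hcdf i h1 h2]
    have hfin : γ (Iic (p i) ×ˢ Iic (q i)) ≠ ⊤ := by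
      rw [hrect]; exact measure_ne_top _ _
    have hd1 : Iic (p i) ×ˢ (univ : Set ℝ) \ Iic (p i) ×ˢ Iic (q i)
        = Iic (p i) ×ˢ (Iic (q i))ᶜ := by
      ext ⟨x, y⟩
      simp only [mem_diff, mem_prod, mem_univ, mem_compl_iff, mem_Iic, true_and, and_true]
      tauto
    have hd2 : (univ : Set ℝ) ×ˢ Iic (q i) \ Iic (p i) ×ˢ Iic (q i)
        = (Iic (p i))ᶜ ×ˢ Iic (q i) := by
      ext ⟨x, y⟩
      simp only [mem_diff, mem_prod, mem_univ, mem_compl_iff, mem_Iic, true_and, and_true]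
      tauto
    have hmr : MeasurableSet (Iic (p i) ×ˢ Iic (q i)) :=
      measurableSet_Iic.prod measurableSet_Iic
    have hz1 : γ (Iic (p i) ×ˢ (Iic (q i))ᶜ) = 0 := by
      rw [← hd1, measure_diff (by intro x hx; exact ⟨hx.1, trivial⟩)
        hmr.nullMeasurableSet hfin, ← hαi, hrect, tsub_self]
    have hz2 : γ ((Iic (p i))ᶜ ×ˢ Iic (q i)) = 0 := by
      rw [← hd2, measure_diff (by intro x hx; exact ⟨trivial, hx.2⟩)
        hmr.nullMeasurableSet hfin, ← hβi, hrect', tsub_self]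
    exact measure_union_null hz1 hz2
  -- complement is contained in the union of bad sets
  have hsub : (⋃ i ∈ Finset.Icc 1 n, sigInterval n p i ×ˢ sigInterval n q i)ᶜ
      ⊆ ⋃ i ∈ Finset.Ico 1 n, N i := by
    rintro ⟨x, y⟩ hxy
    simp only [mem_compl_iff, mem_iUnion, not_exists] at hxy
    obtain ⟨i, hi1, hi2, hxi, hxmin⟩ := exists_sigInterval n hn p x
    obtain ⟨j, hj1, hj2, hyj, hymin⟩ := exists_sigInterval n hn q y
    have hne : i ≠ j := by
      intro h
      have hmem : (x, y) ∈ sigInterval n p i ×ˢ sigInterval n q i := ⟨hxi, h ▸ hyj⟩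
      exact hxy i (Finset.mem_Icc.mpr ⟨hi1, hi2⟩) hmem
    rcases lt_or_gt_of_ne hne with hij | hij
    · have hx' : x ∈ Iic (p i) := by
        have := hxi.2; rwa [if_neg (by omega : i ≠ n)] at this
      have hy' : y ∈ (Iic (q i))ᶜ := by
        simp only [mem_compl_iff, mem_Iic, not_le]; exact hymin i hi1 hij
      have hmemN : (x, y) ∈ N i :=
        Set.mem_union_left _ (show (x, y) ∈ Iic (p i) ×ˢ (Iic (q i))ᶜ from ⟨hx', hy'⟩)
      exact Set.mem_biUnion (Finset.mem_Ico.mpr ⟨hi1, by omega⟩) hmemN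
    · have hy' : y ∈ Iic (q j) := by
        have := hyj.2; rwa [if_neg (by omega : j ≠ n)] at this
      have hx' : x ∈ (Iic (p j))ᶜ := by
        simp only [mem_compl_iff, mem_Iic, not_le]; exact hxmin j hj1 hij
      have hmemN : (x, y) ∈ N j :=
        Set.mem_union_right _ (show (x, y) ∈ (Iic (p j))ᶜ ×ˢ Iic (q j) from ⟨hx', hy'⟩)
      exact Set.mem_biUnion (Finset.mem_Ico.mpr ⟨hj1, by omega⟩) hmemN
  refine measure_mono_null hsub ?_
  exact (measure_biUnion_null_iff (Finset.Ico 1 n).countable_toSet).mpr hnull
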